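/- Fix reals 0 < δ ≤ 1/2, 0 < ε ≤ 1/2, integers k ≥ 1 and 1 ≤ r ≤ 0.25·δ^{-1}·log(k/ε). Let X = {1, ..., rk} be partitioned into k blocks V_1, ..., V_k each of size r, and let S be the family of all k-element subsets of X containing exactly one element from each block. Then S is r-spread, |S| = r^k, and Pr(∃ S ∈ S : S ⊆ X_δ) < 1 - ε, where X_δ includes each element of X independently with probability δ. -/

import Mathlib

open scoped Classical in
/-- The probability that the Bernoulli(`δ`) random subset of `X` (each element
included independently with probability `δ`) satisfies the predicate `E`. -/
noncomputable def bernoulliPr {α : Type*} [DecidableEq α] (X : Finset α) (δ : ℝ)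
    (E : Finset α → Prop) : ℝ :=
  ∑ A ∈ X.powerset, (if E A then δ ^ A.card * (1 - δ) ^ (X.card - A.card) else 0)

open scoped Classical in
/-- A family of `k`-element sets is `r`-spread if every non-empty set `T` is
contained in at most `r^(k - |T|)` members. -/
def IsSpread {α : Type*} (r : ℝ) (k : ℕ) (S : Finset (Finset α)) : Prop :=
  ∀ T : Finset α, T.Nonempty →
    ((S.filter fun A => T ⊆ A).card : ℝ) ≤ r ^ (k - T.card)

open scoped Classical

section Helpers

/-! ### Basic Bernoulli measure lemmas -/

lemma bern_congr {α : Type*} [DecidableEq α] (X : Finset α) (δ : ℝ)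
    {E E' : Finset α → Prop} (h : ∀ B, E B ↔ E' B) :
    bernoulliPr X δ E = bernoulliPr X δ E' := by
  unfold bernoulliPr
  exact Finset.sum_congr rfl fun A _ => by rw [if_congr (h A) rfl rfl]

lemma bern_mass (X : Finset ℕ) (δ : ℝ) :
    ∑ A ∈ X.powerset, δ ^ A.card * (1 - δ) ^ (X.card - A.card) = 1 := by
  have h := Finset.prod_add (fun _ : ℕ => δ) (fun _ : ℕ => (1 - δ)) X
  simp only [Finset.prod_const] at h
  have h2 : ∀ A ∈ X.powerset, δ ^ A.card * (1 - δ) ^ (X.card - A.card)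
      = δ ^ A.card * (1 - δ) ^ (X \ A).card := by
    intro A hA
    rw [Finset.card_sdiff_of_subset (Finset.mem_powerset.mp hA)]
  rw [Finset.sum_congr rfl h2, ← h]
  have : δ + (1 - δ) = 1 := by ring
  rw [this, one_pow]

lemma bern_split (Y Z : Finset ℕ) (hd : Disjoint Y Z) (δ : ℝ) (F G : Finset ℕ → Prop) :
    bernoulliPr (Y ∪ Z) δ (fun B => F (B ∩ Y) ∧ G (B ∩ Z)) =
      bernoulliPr Y δ F * bernoulliPr Z δ G := by
  unfold bernoulliPr
  rw [Finset.sum_mul_sum, ← Finset.sum_product']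
  refine Finset.sum_nbij' (fun A => (A ∩ Y, A ∩ Z)) (fun p => p.1 ∪ p.2) ?_ ?_ ?_ ?_ ?_
  · intro A hA
    simp only [Finset.mem_product, Finset.mem_powerset]
    exact ⟨Finset.inter_subset_right, Finset.inter_subset_right⟩
  · intro p hp
    simp only [Finset.mem_product, Finset.mem_powerset] at hp ⊢
    exact Finset.union_subset_union hp.1 hp.2
  · intro A hA
    simp only [Finset.mem_powerset] at hA
    show A ∩ Y ∪ A ∩ Z = A
    rw [← Finset.inter_union_distrib_left]
    exact Finset.inter_eq_left.mpr hA
  · intro p hp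
    simp only [Finset.mem_product, Finset.mem_powerset] at hp
    show ((p.1 ∪ p.2) ∩ Y, (p.1 ∪ p.2) ∩ Z) = p
    have h1 : (p.1 ∪ p.2) ∩ Y = p.1 := by
      ext a
      simp only [Finset.mem_inter, Finset.mem_union]
      constructor
      · rintro ⟨h | h, hy⟩
        · exact h
        · exact absurd hy (Finset.disjoint_right.mp hd (hp.2 h))
      · intro h; exact ⟨Or.inl h, hp.1 h⟩
    have h2 : (p.1 ∪ p.2) ∩ Z = p.2 := by
      ext a
      simp only [Finset.mem_inter, Finset.mem_union]
      constructor
      · rintro ⟨h | h, hz⟩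
        · exact absurd hz (Finset.disjoint_left.mp hd (hp.1 h))
        · exact h
      · intro h; exact ⟨Or.inr h, hp.2 h⟩
    exact Prod.ext h1 h2
  · intro A hA
    simp only [Finset.mem_powerset] at hA
    by_cases h1 : F (A ∩ Y) <;> by_cases h2 : G (A ∩ Z) <;>
      simp only [h1, h2, if_true, if_false, and_true, and_false, true_and, false_and,
        mul_zero, zero_mul]
    have hAY : (A ∩ Y).card ≤ Y.card := Finset.card_le_card Finset.inter_subset_right
    have hAZ : (A ∩ Z).card ≤ Z.card := Finset.card_le_card Finset.inter_subset_right
    have hcardA : A.card = (A ∩ Y).card + (A ∩ Z).card := by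
      rw [← Finset.card_union_of_disjoint
          (hd.mono Finset.inter_subset_right Finset.inter_subset_right),
        ← Finset.inter_union_distrib_left, Finset.inter_eq_left.mpr hA]
    have hcardX : (Y ∪ Z).card = Y.card + Z.card := Finset.card_union_of_disjoint hd
    rw [hcardA, hcardX]
    have : Y.card + Z.card - ((A ∩ Y).card + (A ∩ Z).card)
        = (Y.card - (A ∩ Y).card) + (Z.card - (A ∩ Z).card) := by omega
    rw [this, pow_add, pow_add]
    ring

lemma bern_single (W : Finset ℕ) (δ : ℝ) :
    bernoulliPr W δ (fun C => C.Nonempty) = 1 - (1 - δ) ^ W.card := by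
  unfold bernoulliPr
  have h : ∀ A ∈ W.powerset,
      (@ite ℝ (A : Finset ℕ).Nonempty (Classical.propDecidable _)
        (δ ^ A.card * (1 - δ) ^ (W.card - A.card)) 0)
      = δ ^ A.card * (1 - δ) ^ (W.card - A.card)
        - (if A = ∅ then δ ^ A.card * (1 - δ) ^ (W.card - A.card) else 0) := by
    intro A _
    rcases A.eq_empty_or_nonempty with h | h
    · simp [h, Finset.not_nonempty_empty]
    · simp [h, Finset.nonempty_iff_ne_empty.mp h]
  refine Eq.trans (Finset.sum_congr rfl h) ?_
  rw [Finset.sum_sub_distrib, bern_mass,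
    Finset.sum_ite_eq' W.powerset (∅ : Finset ℕ)
      (fun A => δ ^ A.card * (1 - δ) ^ (W.card - A.card))]
  simp

lemma bern_blocks {k : ℕ} (δ : ℝ) (V : Fin k → Finset ℕ)
    (hVdisj : ∀ i j : Fin k, i ≠ j → Disjoint (V i) (V j)) (I : Finset (Fin k)) :
    bernoulliPr (I.biUnion V) δ (fun B => ∀ i ∈ I, (B ∩ V i).Nonempty) =
      ∏ i ∈ I, (1 - (1 - δ) ^ (V i).card) := by
  induction I using Finset.induction with
  | empty =>
    simp only [Finset.biUnion_empty, Finset.prod_empty]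
    unfold bernoulliPr
    simp
  | @insert a I ha ih =>
    have hd : Disjoint (V a) (I.biUnion V) := by
      rw [Finset.disjoint_biUnion_right]
      intro i hi
      exact hVdisj a i (fun h => ha (h ▸ hi))
    have key := bern_split (V a) (I.biUnion V) hd δ (fun C => C.Nonempty)
      (fun C => ∀ i ∈ I, (C ∩ V i).Nonempty)
    rw [Finset.biUnion_insert]
    rw [bern_congr _ δ
      (E' := fun B => (B ∩ V a).Nonempty ∧ ∀ i ∈ I, ((B ∩ I.biUnion V) ∩ V i).Nonempty) ?_]
    · rw [key, bern_single, ih, Finset.prod_insert ha]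
    · intro B
      constructor
      · intro h
        refine ⟨h a (Finset.mem_insert_self a I), fun i hi => ?_⟩
        have hVZ : V i ⊆ I.biUnion V := Finset.subset_biUnion_of_mem V hi
        have : B ∩ I.biUnion V ∩ V i = B ∩ V i := by
          rw [Finset.inter_assoc, Finset.inter_eq_right.mpr hVZ]
        rw [this]
        exact h i (Finset.mem_insert_of_mem hi)
      · rintro ⟨h1, h2⟩ i hi
        rcases Finset.mem_insert.mp hi with rfl | hi
        · exact h1
        · have hVZ : V i ⊆ I.biUnion V := Finset.subset_biUnion_of_mem V hi
          have : B ∩ I.biUnion V ∩ V i = B ∩ V i := by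
            rw [Finset.inter_assoc, Finset.inter_eq_right.mpr hVZ]
          rw [← this]
          exact h2 i hi

/-! ### Analytic lemmas -/

lemma exp_neg_sqrt_lt (ε : ℝ) (hε0 : 0 < ε) (hε1 : ε ≤ 1 / 2) :
    Real.exp (-Real.sqrt ε) < 1 - ε := by
  set s := Real.sqrt ε with hsdef
  have hs0 : 0 < s := Real.sqrt_pos.mpr hε0
  have hs2 : s ^ 2 = ε := Real.sq_sqrt hε0.le
  have hs12 : s ^ 2 ≤ 1 / 2 := by rw [hs2]; exact hε1
  have hcube : 1 + s + s ^ 2 / 2 + s ^ 3 / 6 ≤ Real.exp s := by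
    have h := Real.sum_le_exp_of_nonneg hs0.le 4
    have he : ∑ i ∈ Finset.range 4, s ^ i / (Nat.factorial i) = 1 + s + s ^ 2 / 2 + s ^ 3 / 6 := by
      rw [Finset.sum_range_succ, Finset.sum_range_succ, Finset.sum_range_succ,
        Finset.sum_range_one]
      norm_num [Nat.factorial]
    rw [he] at h
    exact h
  have hs708 : s ≤ 0.708 := by nlinarith
  have hs2b : s ^ 2 ≤ 0.708 * s := by nlinarith
  have h3s : s ^ 3 ≤ (1 / 2) * s := by nlinarith
  have h4s : s ^ 4 ≤ 0.354 * s := by nlinarith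
  have h5s : s ^ 5 ≤ (1 / 4) * s := by nlinarith
  have hQ : 1 < (1 - s ^ 2) * (1 + s + s ^ 2 / 2 + s ^ 3 / 6) := by nlinarith
  have hmul2 : 1 < (1 - ε) * Real.exp s := by
    have hexpg : (1 - s ^ 2) * (1 + s + s ^ 2 / 2 + s ^ 3 / 6) ≤ (1 - s ^ 2) * Real.exp s := by
      apply mul_le_mul_of_nonneg_left hcube (by nlinarith)
    rw [← hs2]
    linarith
  have hinv : Real.exp (-s) * Real.exp s = 1 := by
    rw [← Real.exp_add]; ring_nf; exact Real.exp_zero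
  nlinarith [Real.exp_pos s, Real.exp_pos (-s), hmul2, hinv]

lemma analytic_bound (δ ε : ℝ) (k r : ℕ) (hδ0 : 0 < δ) (hδ1 : δ ≤ 1 / 2)
    (hε0 : 0 < ε) (hε1 : ε ≤ 1 / 2) (hk : 1 ≤ k)
    (hrbound : (r : ℝ) ≤ 0.25 * δ⁻¹ * Real.log (k / ε)) :
    (1 - (1 - δ) ^ r) ^ k < 1 - ε := by
  have hk1 : (1 : ℝ) ≤ k := by exact_mod_cast hk
  have hkpos : (0 : ℝ) < k := by linarith
  have hεk : 0 < ε / k := by positivity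
  set y := Real.sqrt (ε / k) with hy
  have hy0 : 0 < y := Real.sqrt_pos.mpr hεk
  have hysq : y ^ 2 = ε / k := Real.sq_sqrt hεk.le
  have hy12 : y ^ 2 ≤ 1 / 2 := by
    rw [hysq]
    calc ε / k ≤ ε / 1 := by
          apply div_le_div_of_nonneg_left hε0.le one_pos hk1
      _ = ε := div_one ε
      _ ≤ 1 / 2 := hε1
  have hylt1 : y < 1 := by nlinarith
  have h1 : Real.exp (-(2 * δ)) ≤ 1 - δ := by
    have hmul : Real.exp (-(2 * δ)) * Real.exp (2 * δ) = 1 := by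
      rw [← Real.exp_add]; ring_nf; exact Real.exp_zero
    nlinarith [Real.add_one_le_exp (2 * δ), Real.exp_pos (2 * δ), Real.exp_pos (-(2 * δ))]
  have h2 : Real.exp (-(2 * δ * r)) ≤ (1 - δ) ^ r := by
    have he : Real.exp (-(2 * δ * r)) = (Real.exp (-(2 * δ))) ^ r := by
      rw [← Real.exp_nat_mul]; ring_nf
    rw [he]
    exact pow_le_pow_left₀ (Real.exp_pos _).le h1 r
  have h3 : y ≤ Real.exp (-(2 * δ * r)) := by
    have hylog : y = Real.exp (-(Real.log ((k : ℝ) / ε) / 2)) := by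
      rw [hy, Real.sqrt_eq_rpow, Real.rpow_def_of_pos hεk]
      congr 1
      rw [show (ε / (k : ℝ)) = ((k : ℝ) / ε)⁻¹ by rw [inv_div], Real.log_inv]
      ring
    rw [hylog]
    apply Real.exp_le_exp.mpr
    have h4 : (r : ℝ) * (4 * δ) ≤ (0.25 * δ⁻¹ * Real.log ((k : ℝ) / ε)) * (4 * δ) :=
      mul_le_mul_of_nonneg_right hrbound (by positivity)
    have h5 : (0.25 * δ⁻¹ * Real.log ((k : ℝ) / ε)) * (4 * δ) = Real.log ((k : ℝ) / ε) := by
      field_simp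
      ring
    rw [h5] at h4
    nlinarith
  have hyp : y ≤ (1 - δ) ^ r := le_trans h3 h2
  have hp1 : (1 - δ) ^ r ≤ 1 := pow_le_one₀ (by linarith) (by linarith)
  have c1 : (1 - (1 - δ) ^ r) ^ k ≤ (1 - y) ^ k :=
    pow_le_pow_left₀ (by linarith) (by linarith) k
  have c2 : (1 - y) ^ k ≤ (Real.exp (-y)) ^ k :=
    pow_le_pow_left₀ (by linarith) (by nlinarith [Real.add_one_le_exp (-y)]) k
  have c3 : (Real.exp (-y)) ^ k = Real.exp (-((k : ℝ) * y)) := by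
    rw [← Real.exp_nat_mul]; ring_nf
  have c4 : Real.exp (-((k : ℝ) * y)) ≤ Real.exp (-Real.sqrt ε) := by
    apply Real.exp_le_exp.mpr
    have hsq : ((k : ℝ) * y) ^ 2 = k * ε := by
      rw [mul_pow, hysq]; field_simp
    have hsε : Real.sqrt ε ^ 2 = ε := Real.sq_sqrt hε0.le
    have : Real.sqrt ε ≤ (k : ℝ) * y := by
      nlinarith [Real.sqrt_nonneg ε, mul_nonneg hkpos.le hy0.le]
    linarith
  calc (1 - (1 - δ) ^ r) ^ k ≤ (1 - y) ^ k := c1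
    _ ≤ (Real.exp (-y)) ^ k := c2
    _ = Real.exp (-((k : ℝ) * y)) := c3
    _ ≤ Real.exp (-Real.sqrt ε) := c4
    _ < 1 - ε := exp_neg_sqrt_lt ε hε0 hε1

/-! ### Combinatorial lemmas -/

lemma singleton_of_card_one {A : Finset ℕ} (h : A.card = 1) : A = {A.sum id} := by
  obtain ⟨x, hx⟩ := Finset.card_eq_one.mp h
  subst hx
  simp

lemma block_decomp {k : ℕ} (V : Fin k → Finset ℕ) {X A : Finset ℕ}
    (hVcover : Finset.univ.biUnion V = X) (hA : A ⊆ X) :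
    Finset.univ.biUnion (fun b => A ∩ V b) = A := by
  ext x
  simp only [Finset.mem_biUnion, Finset.mem_inter, Finset.mem_univ, true_and]
  constructor
  · rintro ⟨b, hxA, _⟩
    exact hxA
  · intro hx
    have hx2 := hA hx
    rw [← hVcover] at hx2
    simp only [Finset.mem_biUnion, Finset.mem_univ, true_and] at hx2
    obtain ⟨b, hb⟩ := hx2
    exact ⟨b, hx, hb⟩

lemma biUnion_singleton_inter {k : ℕ} (V : Fin k → Finset ℕ)
    (hVdisj : ∀ i j : Fin k, i ≠ j → Disjoint (V i) (V j))
    (f : Fin k → ℕ) (hf : ∀ i, f i ∈ V i) (b : Fin k) :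
    (Finset.univ.biUnion fun i => ({f i} : Finset ℕ)) ∩ V b = {f b} := by
  ext x
  simp only [Finset.mem_inter, Finset.mem_biUnion, Finset.mem_univ, true_and,
    Finset.mem_singleton]
  constructor
  · rintro ⟨⟨c, rfl⟩, hxb⟩
    by_contra hne
    have hcb : c ≠ b := fun h => hne (by rw [h])
    exact Finset.disjoint_left.mp (hVdisj c b hcb) (hf c) hxb
  · rintro rfl
    exact ⟨⟨b, rfl⟩, hf b⟩

lemma transversal_card {k r : ℕ} (V : Fin k → Finset ℕ) (X : Finset ℕ)
    (hVdisj : ∀ i j : Fin k, i ≠ j → Disjoint (V i) (V j))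
    (hVcover : Finset.univ.biUnion V = X)
    (hVcard : ∀ i, (V i).card = r) :
    (X.powerset.filter fun A => ∀ i : Fin k, (A ∩ V i).card = 1).card = r ^ k := by
  have hcard : (Fintype.piFinset fun i : Fin k => V i).card = r ^ k := by
    rw [Fintype.card_piFinset]
    simp [hVcard]
  rw [← hcard]
  apply Finset.card_nbij' (fun A => fun b => (A ∩ V b).sum id)
    (fun f => Finset.univ.biUnion fun b => ({f b} : Finset ℕ))
  · intro A hA
    simp only [Finset.mem_coe, Finset.mem_filter, Finset.mem_powerset] at hA
    rw [Finset.mem_coe, Fintype.mem_piFinset]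
    intro b
    have h := singleton_of_card_one (hA.2 b)
    have : (A ∩ V b).sum id ∈ A ∩ V b := by
      rw [h]; simp
    exact (Finset.mem_inter.mp this).2
  · intro f hf
    rw [Finset.mem_coe, Fintype.mem_piFinset] at hf
    simp only [Finset.mem_coe, Finset.mem_filter, Finset.mem_powerset]
    constructor
    · intro x hx
      simp only [Finset.mem_biUnion, Finset.mem_univ, true_and,
        Finset.mem_singleton] at hx
      obtain ⟨b, rfl⟩ := hx
      rw [← hVcover]
      exact Finset.mem_biUnion.mpr ⟨b, Finset.mem_univ b, hf b⟩
    · intro b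
      rw [biUnion_singleton_inter V hVdisj f hf b]
      simp
  · intro A hA
    simp only [Finset.mem_coe, Finset.mem_filter, Finset.mem_powerset] at hA
    have h1 : ∀ b : Fin k, ({(A ∩ V b).sum id} : Finset ℕ) = A ∩ V b :=
      fun b => (singleton_of_card_one (hA.2 b)).symm
    calc Finset.univ.biUnion (fun b => ({(A ∩ V b).sum id} : Finset ℕ))
        = Finset.univ.biUnion (fun b => A ∩ V b) := Finset.biUnion_congr rfl fun b _ => h1 b
      _ = A := block_decomp V hVcover hA.1
  · intro f hf
    rw [Finset.mem_coe, Fintype.mem_piFinset] at hf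
    funext b
    dsimp only
    rw [biUnion_singleton_inter V hVdisj f hf b]
    simp

lemma transversal_spread {k r : ℕ} (V : Fin k → Finset ℕ) (X : Finset ℕ)
    (hVdisj : ∀ i j : Fin k, i ≠ j → Disjoint (V i) (V j))
    (hVcover : Finset.univ.biUnion V = X)
    (hVcard : ∀ i, (V i).card = r)
    (T : Finset ℕ) (hT : T.Nonempty) :
    ((((X.powerset.filter fun A => ∀ i : Fin k, (A ∩ V i).card = 1).filter
      fun A => T ⊆ A).card : ℝ)) ≤ (r : ℝ) ^ (k - T.card) := by
  set S := X.powerset.filter fun A => ∀ i : Fin k, (A ∩ V i).card = 1 with hSdef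
  by_cases hex : ∃ A ∈ S, T ⊆ A
  · obtain ⟨A₀, hA₀S, hTA₀⟩ := hex
    simp only [hSdef, Finset.mem_filter, Finset.mem_powerset] at hA₀S
    have hTX : T ⊆ X := hTA₀.trans hA₀S.1
    set I := Finset.univ.filter (fun i : Fin k => (T ∩ V i).Nonempty) with hIdef
    have hT1 : ∀ i, (T ∩ V i).card ≤ 1 := fun i =>
      le_trans (Finset.card_le_card (Finset.inter_subset_inter hTA₀ Finset.Subset.rfl))
        (le_of_eq (hA₀S.2 i))
    have hIcard : I.card = T.card := by
      have hdecomp : Finset.univ.biUnion (fun b => T ∩ V b) = T := block_decomp V hVcover hTX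
      have hsum : ∑ b : Fin k, (T ∩ V b).card = T.card := by
        rw [← Finset.card_biUnion, hdecomp]
        intro i _ j _ hij
        exact (hVdisj i j hij).mono Finset.inter_subset_right Finset.inter_subset_right
      rw [← hsum]
      rw [← Finset.sum_filter_add_sum_filter_not Finset.univ
        (fun i : Fin k => (T ∩ V i).Nonempty) (fun b => (T ∩ V b).card)]
      have hz : ∑ b ∈ Finset.univ.filter (fun i : Fin k => ¬(T ∩ V i).Nonempty),
          (T ∩ V b).card = 0 := by
        apply Finset.sum_eq_zero
        intro b hb
        simp only [Finset.mem_filter, Finset.not_nonempty_iff_eq_empty] at hb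
        rw [hb.2]
        simp
      have ho : ∑ b ∈ I, (T ∩ V b).card = I.card := by
        rw [Finset.card_eq_sum_ones]
        apply Finset.sum_congr rfl
        intro b hb
        simp only [hIdef, Finset.mem_filter] at hb
        exact le_antisymm (hT1 b) (Finset.card_pos.mpr hb.2)
      rw [hz, ho, add_zero]
    set g : Fin k → Finset ℕ :=
      fun i => if i ∈ I then ({(T ∩ V i).sum id} : Finset ℕ) else V i with hgdef
    have hle : (S.filter fun A => T ⊆ A).card ≤ (Fintype.piFinset g).card := by
      apply Finset.card_le_card_of_injOn (fun A => fun b => (A ∩ V b).sum id)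
      · intro A hA
        simp only [Finset.mem_coe, Finset.mem_filter] at hA
        obtain ⟨hAS, hTA⟩ := hA
        simp only [hSdef, Finset.mem_filter, Finset.mem_powerset] at hAS
        rw [Finset.mem_coe, Fintype.mem_piFinset]
        intro b
        have hsing := singleton_of_card_one (hAS.2 b)
        by_cases hb : b ∈ I
        · have hTb : (T ∩ V b).Nonempty := by
            simp only [hIdef, Finset.mem_filter] at hb
            exact hb.2
          have hTsub : T ∩ V b ⊆ A ∩ V b :=
            Finset.inter_subset_inter hTA Finset.Subset.rfl
          have hTeq : T ∩ V b = A ∩ V b := by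
            rw [hsing] at hTsub ⊢
            rcases Finset.subset_singleton_iff.mp hTsub with h | h
            · exact absurd h (Finset.nonempty_iff_ne_empty.mp hTb)
            · exact h
          simp only [hgdef, if_pos hb, Finset.mem_singleton, hTeq]
        · simp only [hgdef, if_neg hb]
          have : (A ∩ V b).sum id ∈ A ∩ V b := by rw [hsing]; simp
          exact (Finset.mem_inter.mp this).2
      · intro A hA A' hA' heq
        simp only [Finset.coe_filter, Set.mem_setOf_eq] at hA hA'
        obtain ⟨hAS, _⟩ := hA
        obtain ⟨hA'S, _⟩ := hA'
        simp only [hSdef, Finset.mem_filter, Finset.mem_powerset] at hAS hA'S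
        have hAd : Finset.univ.biUnion (fun b => A ∩ V b) = A := block_decomp V hVcover hAS.1
        have hA'd : Finset.univ.biUnion (fun b => A' ∩ V b) = A' := block_decomp V hVcover hA'S.1
        rw [← hAd, ← hA'd]
        apply Finset.biUnion_congr rfl
        intro b _
        rw [singleton_of_card_one (hAS.2 b), singleton_of_card_one (hA'S.2 b)]
        exact congrArg (fun x => ({x} : Finset ℕ)) (congrFun heq b)
    have hgcard : (Fintype.piFinset g).card = r ^ (k - T.card) := by
      rw [Fintype.card_piFinset]
      have hcards : ∀ i, (g i).card = if i ∈ I then 1 else r := by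
        intro i
        by_cases hi : i ∈ I <;> simp [hgdef, hi, hVcard i]
      rw [Finset.prod_congr rfl (fun i _ => hcards i), Finset.prod_ite, Finset.prod_const,
        Finset.prod_const, one_pow, one_mul]
      congr 1
      rw [← hIcard]
      have : Finset.univ.filter (fun i : Fin k => ¬ i ∈ I) = Iᶜ := by
        ext i
        simp [Finset.mem_compl]
      rw [this, Finset.card_compl, Fintype.card_fin]
    calc ((S.filter fun A => T ⊆ A).card : ℝ)
        ≤ ((Fintype.piFinset g).card : ℝ) := by exact_mod_cast hle
      _ = (r : ℝ) ^ (k - T.card) := by rw [hgcard]; push_cast; ring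
  · have : S.filter (fun A => T ⊆ A) = ∅ := by
      rw [Finset.filter_eq_empty_iff]
      intro A hA hTA
      exact hex ⟨A, hA, hTA⟩
    rw [this]
    simp only [Finset.card_empty, Nat.cast_zero]
    positivity

end Helpers

open scoped Classical in
/-- Sharpness of the spread lemma: for `X = {1,…,rk}` partitioned into `k`
blocks of size `r` with `r ≤ 0.25·δ⁻¹·log(k/ε)`, the family `S` of all
transversals is `r`-spread with `|S| = r^k`, yet the Bernoulli(`δ`) random
subset of `X` contains a member of `S` with probability less than `1 - ε`. -/
theorem spread_sharpness (δ ε : ℝ) (hδ0 : 0 < δ) (hδ1 : δ ≤ 1 / 2)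
    (hε0 : 0 < ε) (hε1 : ε ≤ 1 / 2) (k r : ℕ) (hk : 1 ≤ k) (hr : 1 ≤ r)
    (hrbound : (r : ℝ) ≤ 0.25 * δ⁻¹ * Real.log (k / ε))
    (V : Fin k → Finset ℕ)
    (hVdisj : ∀ i j : Fin k, i ≠ j → Disjoint (V i) (V j))
    (hVcover : Finset.univ.biUnion V = Finset.Icc 1 (r * k))
    (hVcard : ∀ i, (V i).card = r)
    (S : Finset (Finset ℕ))
    (hS : S = (Finset.Icc 1 (r * k)).powerset.filter
      fun A => ∀ i : Fin k, (A ∩ V i).card = 1) :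
    IsSpread (r : ℝ) k S ∧ S.card = r ^ k ∧
      bernoulliPr (Finset.Icc 1 (r * k)) δ (fun B => ∃ A ∈ S, A ⊆ B) < 1 - ε := by
  subst hS
  set X := Finset.Icc 1 (r * k) with hXdef
  refine ⟨?_, ?_, ?_⟩
  · intro T hT
    have h := transversal_spread V X hVdisj hVcover hVcard T hT
    convert h using 4
  · exact transversal_card V X hVdisj hVcover hVcard
  · -- event equivalence
    have hequiv : ∀ B : Finset ℕ,
        (∃ A ∈ X.powerset.filter fun A => ∀ i : Fin k, (A ∩ V i).card = 1, A ⊆ B)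
          ↔ ∀ i ∈ (Finset.univ : Finset (Fin k)), (B ∩ V i).Nonempty := by
      intro B
      constructor
      · rintro ⟨A, hA, hAB⟩ i _
        simp only [Finset.mem_filter, Finset.mem_powerset] at hA
        have h1 : (A ∩ V i).Nonempty := Finset.card_pos.mp (by rw [hA.2 i]; norm_num)
        exact h1.mono (Finset.inter_subset_inter hAB Finset.Subset.rfl)
      · intro h
        have hne : ∀ i : Fin k, (B ∩ V i).Nonempty := fun i => h i (Finset.mem_univ i)
        set c : Fin k → ℕ := fun i => (hne i).choose with hc
        have hcmem : ∀ i, c i ∈ B ∩ V i := fun i => (hne i).choose_spec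
        have hcV : ∀ i, c i ∈ V i := fun i => (Finset.mem_inter.mp (hcmem i)).2
        refine ⟨Finset.univ.biUnion fun i => ({c i} : Finset ℕ), ?_, ?_⟩
        · simp only [Finset.mem_filter, Finset.mem_powerset]
          constructor
          · intro x hx
            simp only [Finset.mem_biUnion, Finset.mem_univ, true_and,
              Finset.mem_singleton] at hx
            obtain ⟨i, rfl⟩ := hx
            rw [← hVcover]
            exact Finset.mem_biUnion.mpr ⟨i, Finset.mem_univ i, hcV i⟩
          · intro i
            rw [biUnion_singleton_inter V hVdisj c hcV i]
            simp
        · intro x hx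
          simp only [Finset.mem_biUnion, Finset.mem_univ, true_and,
            Finset.mem_singleton] at hx
          obtain ⟨i, rfl⟩ := hx
          exact (Finset.mem_inter.mp (hcmem i)).1
    rw [bern_congr X δ hequiv]
    have hXeq : X = Finset.univ.biUnion V := hVcover.symm
    rw [hXeq, bern_blocks δ V hVdisj Finset.univ]
    have : ∏ i : Fin k, (1 - (1 - δ) ^ (V i).card) = (1 - (1 - δ) ^ r) ^ k := by
      rw [Finset.prod_congr rfl (fun i _ => by rw [hVcard i]), Finset.prod_const,
        Finset.card_univ, Fintype.card_fin]
    rw [this]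
    exact analytic_bound δ ε k r hδ0 hδ1 hε0 hε1 hk hrbound
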